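/- Let J be a Jordan curve in K². (i) If J contains only pure points, then Γ⁻¹(J) is a closed 4-curve in ℤ². (ii) If Γ*(Γ⁻¹(J)) = J, then Γ⁻¹(J) is a closed 8-curve in ℤ². -/

import Mathlib

open TopologicalSpace

/-- Basic (minimal) neighborhoods generating the Khalimsky topology on ℤ. -/
def khN (n : ℤ) : Set ℤ := if Odd n then {n} else {n - 1, n, n + 1}

/-- The Khalimsky (digital) topology on the integers. -/
def khLine : TopologicalSpace ℤ := generateFrom (Set.range khN)

/-- The Khalimsky topology on the digital plane ℤ × ℤ (product topology). -/
def khPlane : TopologicalSpace (ℤ × ℤ) :=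
  @instTopologicalSpaceProd ℤ ℤ khLine khLine

/-- A point of the digital plane is pure if both coordinates have the same parity. -/
def IsPure (p : ℤ × ℤ) : Prop := p.1 % 2 = p.2 % 2

/-- A point of the digital plane is mixed if it is not pure. -/
def IsMixed (p : ℤ × ℤ) : Prop := ¬ IsPure p

/-- A closed (pure) point: both coordinates even. -/
def IsClosedPt (p : ℤ × ℤ) : Prop := Even p.1 ∧ Even p.2

/-- An open (pure) point: both coordinates odd. -/
def IsOpenPt (p : ℤ × ℤ) : Prop := Odd p.1 ∧ Odd p.2

/-- The minimal open neighborhood N(x) of a point in the digital plane. -/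
def minN (x : ℤ × ℤ) : Set (ℤ × ℤ) := ⋂₀ {U : Set (ℤ × ℤ) | khPlane.IsOpen U ∧ x ∈ U}

/-- The closure cl(x) of a singleton in the digital plane. -/
def clPt (x : ℤ × ℤ) : Set (ℤ × ℤ) := @closure (ℤ × ℤ) khPlane {x}

/-- The adjacency set A(x) of a point of the digital plane. -/
def AdjSet (x : ℤ × ℤ) : Set (ℤ × ℤ) :=
  {y | y ≠ x ∧ @IsConnected (ℤ × ℤ) khPlane {x, y}}

/-- An arc: a subset of the digital plane homeomorphic (in the subspace topology)
to a finite interval of the Khalimsky line. -/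
def IsArc (C : Set (ℤ × ℤ)) : Prop :=
  ∃ a b : ℤ,
    Nonempty (@Homeomorph (↥C) (↥(Set.Icc a b))
      (TopologicalSpace.induced Subtype.val khPlane)
      (TopologicalSpace.induced Subtype.val khLine))

/-- z is an endpoint of the arc C: it has exactly one adjacent point within C. -/
def IsEndpointOf (z : ℤ × ℤ) (C : Set (ℤ × ℤ)) : Prop :=
  z ∈ C ∧ (AdjSet z ∩ C).encard = 1

/-- A Jordan curve in the digital plane. -/
def IsJordanCurve (J : Set (ℤ × ℤ)) : Prop :=
  @IsConnected (ℤ × ℤ) khPlane J ∧ 4 ≤ J.encard ∧ ∀ x ∈ J, IsArc (J \ {x})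

/-- The slant embedding Γ(x,y) = (x+y, y−x) of the Rosenfeld plane into the digital plane. -/
def Γmap (p : ℤ × ℤ) : ℤ × ℤ := (p.1 + p.2, p.2 - p.1)

/-- The operator Γ* turning subsets of ℤ² into subsets of the digital plane. -/
def ΓStar (A : Set (ℤ × ℤ)) : Set (ℤ × ℤ) :=
  Γmap '' A ∪
    {x | IsMixed x ∧ (minN x ⊆ Γmap '' A ∪ {x} ∨ clPt x ⊆ Γmap '' A ∪ {x})}

/-- 8-adjacency in ℤ². -/
def Adj8 (p q : ℤ × ℤ) : Prop := p ≠ q ∧ |p.1 - q.1| ≤ 1 ∧ |p.2 - q.2| ≤ 1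

/-- 4-adjacency in ℤ². -/
def Adj4 (p q : ℤ × ℤ) : Prop := p ≠ q ∧ |p.1 - q.1| + |p.2 - q.2| = 1

/-- The 8-neighbours of x within C. -/
def nbrs8 (C : Set (ℤ × ℤ)) (x : ℤ × ℤ) : Set (ℤ × ℤ) := {y ∈ C | Adj8 x y}

/-- The 4-neighbours of x within C. -/
def nbrs4 (C : Set (ℤ × ℤ)) (x : ℤ × ℤ) : Set (ℤ × ℤ) := {y ∈ C | Adj4 x y}

/-- x is an 8-endpoint of C. -/
def Is8Endpoint (C : Set (ℤ × ℤ)) (x : ℤ × ℤ) : Prop :=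
  x ∈ C ∧ (nbrs8 C x).encard = 1

/-- x is a 4-endpoint of C. -/
def Is4Endpoint (C : Set (ℤ × ℤ)) (x : ℤ × ℤ) : Prop :=
  x ∈ C ∧ (nbrs4 C x).encard = 1

/-- An 8-path: a finite set with exactly two 8-endpoints, every other point
having exactly two 8-adjacent points in the set. -/
def Is8Path (C : Set (ℤ × ℤ)) : Prop :=
  C.Finite ∧ {x | Is8Endpoint C x}.encard = 2 ∧
    ∀ x ∈ C, ¬ Is8Endpoint C x → (nbrs8 C x).encard = 2

/-- A 4-path. -/
def Is4Path (C : Set (ℤ × ℤ)) : Prop :=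
  C.Finite ∧ {x | Is4Endpoint C x}.encard = 2 ∧
    ∀ x ∈ C, ¬ Is4Endpoint C x → (nbrs4 C x).encard = 2

/-- A closed 8-curve: every point has exactly two 8-adjacent points in the set. -/
def Is8ClosedCurve (C : Set (ℤ × ℤ)) : Prop :=
  C.Finite ∧ ∀ x ∈ C, (nbrs8 C x).encard = 2

/-- A closed 4-curve. -/
def Is4ClosedCurve (C : Set (ℤ × ℤ)) : Prop :=
  C.Finite ∧ ∀ x ∈ C, (nbrs4 C x).encard = 2

/-- 8-connectedness: there is no partition into two nonempty pieces that are
not 8-adjacent to each other. -/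
def Conn8 (S : Set (ℤ × ℤ)) : Prop :=
  ¬ ∃ A B : Set (ℤ × ℤ), A.Nonempty ∧ B.Nonempty ∧ A ∪ B = S ∧ A ∩ B = ∅ ∧
      ∀ a ∈ A, ∀ b ∈ B, ¬ Adj8 a b

/-- 4-connectedness. -/
def Conn4 (S : Set (ℤ × ℤ)) : Prop :=
  ¬ ∃ A B : Set (ℤ × ℤ), A.Nonempty ∧ B.Nonempty ∧ A ∪ B = S ∧ A ∩ B = ∅ ∧
      ∀ a ∈ A, ∀ b ∈ B, ¬ Adj4 a b

/-- T is a 4-component of S: a maximal 4-connected subset of S. -/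
def Is4CompOf (T S : Set (ℤ × ℤ)) : Prop :=
  T ⊆ S ∧ Conn4 T ∧ ∀ T' : Set (ℤ × ℤ), T ⊆ T' → T' ⊆ S → Conn4 T' → T' = T

/-- U is a connected component of S in the digital plane. -/
def IsCompOf (U S : Set (ℤ × ℤ)) : Prop :=
  ∃ x ∈ S, @connectedComponentIn (ℤ × ℤ) khPlane S x = U

/-- The set S_J of mixed points of Γ*(Γ⁻¹(J)) having exactly three adjacent points in J. -/
def SJ (J : Set (ℤ × ℤ)) : Set (ℤ × ℤ) :=
  {m | m ∈ ΓStar (Γmap ⁻¹' J) ∧ IsMixed m ∧ (AdjSet m ∩ J).encard = 3}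

lemma mem_khN_iff {m n : ℤ} : m ∈ khN n ↔ m = n ∨ (Even n ∧ (m = n - 1 ∨ m = n + 1)) := by
  unfold khN
  rcases Int.even_or_odd n with h | h
  · rw [if_neg (by simpa using h)]
    simp only [Set.mem_insert_iff, Set.mem_singleton_iff]
    tauto
  · rw [if_pos h]
    simp only [Set.mem_singleton_iff]
    constructor
    · tauto
    · rintro (rfl | ⟨he, _⟩)
      · rfl
      · exact absurd he (Int.not_even_iff_odd.mpr h)

lemma mem_khN_self (n : ℤ) : n ∈ khN n := mem_khN_iff.mpr (Or.inl rfl)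

lemma khN_isOpen (n : ℤ) : khLine.IsOpen (khN n) :=
  TopologicalSpace.GenerateOpen.basic _ ⟨n, rfl⟩

lemma khN_sub {m k : ℤ} (h : m ∈ khN k) : khN m ⊆ khN k := by
  intro z hz
  rw [mem_khN_iff] at h hz ⊢
  rcases h with rfl | ⟨hek, h⟩
  · exact hz
  · rcases hz with rfl | ⟨hem, hz⟩
    · right; exact ⟨hek, h⟩
    · exfalso
      rcases h with rfl | rfl
      · exact (Int.even_add_one.mp (by simpa using hek)) hem
      · exact (Int.even_add_one.mp (by simpa using hem)) hek

lemma khN_minimal {U : Set ℤ} (hU : khLine.IsOpen U) {m : ℤ} (hm : m ∈ U) : khN m ⊆ U := by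
  have : TopologicalSpace.GenerateOpen (Set.range khN) U := hU
  induction this with
  | basic s hs => obtain ⟨k, rfl⟩ := hs; exact khN_sub hm
  | univ => exact fun z _ => trivial
  | inter s t hs ht ihs iht => exact fun z hz => ⟨ihs hs hm.1 hz, iht ht hm.2 hz⟩
  | sUnion S hS ih =>
      obtain ⟨s, hs, hms⟩ := hm
      exact fun z hz => ⟨s, hs, ih s hs (hS s hs) hms hz⟩

lemma isOpen_khN_prod (a b : ℤ) : khPlane.IsOpen (khN a ×ˢ khN b) :=
  @IsOpen.prod ℤ ℤ khLine khLine _ _ (khN_isOpen a) (khN_isOpen b)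

lemma minN_eq (x : ℤ × ℤ) : minN x = khN x.1 ×ˢ khN x.2 := by
  apply subset_antisymm
  · exact Set.sInter_subset_of_mem ⟨isOpen_khN_prod _ _, mem_khN_self _, mem_khN_self _⟩
  · intro y hy
    rw [minN, Set.mem_sInter]
    rintro U ⟨hUo, hxU⟩
    obtain ⟨u, v, hu, hv, hxu, hxv, huv⟩ :=
      (@isOpen_prod_iff ℤ ℤ khLine khLine U).mp hUo x.1 x.2 (by simpa using hxU)
    exact huv ⟨khN_minimal hu hxu hy.1, khN_minimal hv hxv hy.2⟩

lemma isOpen_minN (x : ℤ × ℤ) : khPlane.IsOpen (minN x) := by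
  rw [minN_eq]; exact isOpen_khN_prod _ _

lemma mem_minN_self (x : ℤ × ℤ) : x ∈ minN x := by
  rw [minN_eq]; exact ⟨mem_khN_self _, mem_khN_self _⟩

lemma minN_subset {x : ℤ × ℤ} {U : Set (ℤ × ℤ)} (hU : khPlane.IsOpen U) (hx : x ∈ U) :
    minN x ⊆ U := Set.sInter_subset_of_mem ⟨hU, hx⟩

lemma mem_clPt_iff {x y : ℤ × ℤ} : y ∈ clPt x ↔ x ∈ minN y := by
  letI : TopologicalSpace (ℤ × ℤ) := khPlane
  show y ∈ closure {x} ↔ _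
  rw [mem_closure_iff]
  constructor
  · intro h
    obtain ⟨z, hz, hzx⟩ := h (minN y) (isOpen_minN y) (mem_minN_self y)
    simpa [hzx.symm] using hz
  · intro h o ho hyo
    exact ⟨x, minN_subset ho hyo h, rfl⟩

lemma plane_pair_conn {x y : ℤ × ℤ} (h : y ≠ x) :
    @IsConnected (ℤ × ℤ) khPlane {x, y} ↔ x ∈ minN y ∨ y ∈ minN x := by
  letI : TopologicalSpace (ℤ × ℤ) := khPlane
  constructor
  · intro hc
    by_contra hn
    push_neg at hn
    obtain ⟨h1, h2⟩ := hn
    have := hc.2 (minN x) (minN y) (isOpen_minN x) (isOpen_minN y)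
      (fun z hz => by
          rcases hz with rfl | rfl
          exacts [Or.inl (mem_minN_self _), Or.inr (mem_minN_self _)])
      ⟨x, Or.inl rfl, mem_minN_self x⟩ ⟨y, Or.inr rfl, mem_minN_self y⟩
    obtain ⟨z, hz, hzx, hzy⟩ := this
    rcases hz with rfl | rfl
    · exact h1 hzy
    · exact h2 hzx
  · intro hm
    have key : ∀ a b : ℤ × ℤ, a ∈ minN b → IsConnected ({a, b} : Set (ℤ × ℤ)) := by
      intro a b hab
      have hsub : ({a, b} : Set (ℤ × ℤ)) ⊆ closure {a} := by
        rintro z (rfl | rfl)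
        · exact subset_closure rfl
        · exact mem_clPt_iff.mpr hab
      exact ⟨⟨a, Or.inl rfl⟩,
        (isPreconnected_singleton (x := a)).subset_closure (by simp) hsub⟩
    rcases hm with hm | hm
    · exact key x y hm
    · have : ({x, y} : Set (ℤ × ℤ)) = {y, x} := Set.pair_comm x y
      rw [this]
      exact key y x hm

lemma line_mem_closure_iff {m n : ℤ} :
    n ∈ @closure ℤ khLine {m} ↔ m ∈ khN n := by
  letI : TopologicalSpace ℤ := khLine
  rw [mem_closure_iff]
  constructor
  · intro h
    obtain ⟨z, hz, hzm⟩ := h (khN n) (khN_isOpen n) (mem_khN_self n)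
    simpa [hzm.symm] using hz
  · intro h o ho hno
    exact ⟨m, khN_minimal ho hno h, rfl⟩

lemma line_pair_conn {m n : ℤ} (h : n ≠ m) :
    @IsConnected ℤ khLine {m, n} ↔ m ∈ khN n ∨ n ∈ khN m := by
  letI : TopologicalSpace ℤ := khLine
  constructor
  · intro hc
    by_contra hn
    push_neg at hn
    obtain ⟨h1, h2⟩ := hn
    have := hc.2 (khN m) (khN n) (khN_isOpen m) (khN_isOpen n)
      (fun z hz => by
          rcases hz with rfl | rfl
          exacts [Or.inl (mem_khN_self _), Or.inr (mem_khN_self _)])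
      ⟨m, Or.inl rfl, mem_khN_self m⟩ ⟨n, Or.inr rfl, mem_khN_self n⟩
    obtain ⟨z, hz, hzm, hzn⟩ := this
    rcases hz with rfl | rfl
    · exact h1 hzn
    · exact h2 hzm
  · intro hm
    have key : ∀ a b : ℤ, a ∈ khN b → IsConnected ({a, b} : Set ℤ) := by
      intro a b hab
      have hsub : ({a, b} : Set ℤ) ⊆ closure {a} := by
        rintro z (rfl | rfl)
        · exact subset_closure rfl
        · exact line_mem_closure_iff.mpr hab
      exact ⟨⟨a, Or.inl rfl⟩,
        (isPreconnected_singleton (x := a)).subset_closure (by simp) hsub⟩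
    rcases hm with hm | hm
    · exact key m n hm
    · rw [Set.pair_comm m n]
      exact key n m hm

lemma abs_sub_eq_one_iff {p q : ℤ} : |p - q| = 1 ↔ p = q + 1 ∨ p = q - 1 := by
  rw [abs_eq (by norm_num : (0:ℤ) ≤ 1)]; omega

/-- Adjacency in the Khalimsky line: |m - n| = 1. -/
lemma line_adj_iff {m n : ℤ} (h : n ≠ m) :
    @IsConnected ℤ khLine {m, n} ↔ |m - n| = 1 := by
  rw [line_pair_conn h, abs_sub_eq_one_iff]
  constructor
  · rintro (hm | hm) <;> rw [mem_khN_iff] at hm <;>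
      rcases hm with rfl | ⟨_, rfl | rfl⟩ <;> omega
  · intro habs
    rcases Int.even_or_odd n with he | ho
    · exact Or.inl (mem_khN_iff.mpr (Or.inr ⟨he, by omega⟩))
    · have hem : Even m := by
        rcases Int.even_or_odd m with h' | h'
        · exact h'
        · exfalso
          obtain ⟨a, ha⟩ := h'; obtain ⟨b, hb⟩ := ho
          omega
      exact Or.inr (mem_khN_iff.mpr (Or.inr ⟨hem, by omega⟩))

lemma mem_minN_iff {x y : ℤ × ℤ} : y ∈ minN x ↔ y.1 ∈ khN x.1 ∧ y.2 ∈ khN x.2 := by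
  rw [minN_eq]; rfl

lemma mem_khN_iff' {m n : ℤ} : m ∈ khN n ↔ (m = n ∨ (n % 2 = 0 ∧ (m = n - 1 ∨ m = n + 1))) := by
  rw [mem_khN_iff, Int.even_iff]

lemma mem_adjSet_iff {x y : ℤ × ℤ} : y ∈ AdjSet x ↔ y ≠ x ∧ (x ∈ minN y ∨ y ∈ minN x) := by
  unfold AdjSet
  simp only [Set.mem_setOf_eq]
  constructor
  · rintro ⟨h, hc⟩; exact ⟨h, (plane_pair_conn h).mp hc⟩
  · rintro ⟨h, hc⟩; exact ⟨h, (plane_pair_conn h).mpr hc⟩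

lemma adjSet_comm {x y : ℤ × ℤ} : y ∈ AdjSet x ↔ x ∈ AdjSet y := by
  rw [mem_adjSet_iff, mem_adjSet_iff]
  constructor <;> rintro ⟨h, hc⟩ <;> exact ⟨h.symm, hc.symm⟩

lemma adj_pure {x y : ℤ × ℤ} (hx : IsPure x) :
    y ∈ AdjSet x ↔ y ≠ x ∧ |y.1 - x.1| ≤ 1 ∧ |y.2 - x.2| ≤ 1 := by
  unfold IsPure at hx
  rw [mem_adjSet_iff, mem_minN_iff, mem_minN_iff, mem_khN_iff', mem_khN_iff',
    mem_khN_iff', mem_khN_iff', abs_le, abs_le, ne_eq, Prod.ext_iff]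
  omega

lemma adj_mixed {x y : ℤ × ℤ} (hx : IsMixed x) :
    y ∈ AdjSet x ↔ (y.1 = x.1 ∧ |y.2 - x.2| = 1) ∨ (y.2 = x.2 ∧ |y.1 - x.1| = 1) := by
  unfold IsMixed IsPure at hx
  rw [mem_adjSet_iff, mem_minN_iff, mem_minN_iff, mem_khN_iff', mem_khN_iff',
    mem_khN_iff', mem_khN_iff', abs_sub_eq_one_iff, abs_sub_eq_one_iff, ne_eq, Prod.ext_iff]
  omega

lemma inducing_pair_conn {X Y : Type*} {tX : TopologicalSpace X} {tY : TopologicalSpace Y}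
    {f : X → Y} (hf : @Topology.IsInducing X Y tX tY f) (x y : X) :
    @IsConnected Y tY {f x, f y} ↔ @IsConnected X tX {x, y} := by
  letI := tX; letI := tY
  have himg : ({f x, f y} : Set Y) = f '' {x, y} := by
    simp [Set.image_insert_eq]
  rw [himg]
  constructor
  · rintro ⟨hne, hc⟩
    exact ⟨⟨x, Or.inl rfl⟩, hf.isPreconnected_image.mp hc⟩
  · rintro ⟨hne, hc⟩
    exact ⟨⟨f x, ⟨x, Or.inl rfl, rfl⟩⟩, hf.isPreconnected_image.mpr hc⟩

lemma Icc_nbr_card {a b n : ℤ} (ha : a ≤ n) (hb : n ≤ b) :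
    ({k : ℤ | k ∈ Set.Icc a b ∧ |k - n| = 1}).ncard
      = ((if a < n then 1 else 0) + (if n < b then 1 else 0)) := by
  by_cases h1 : a < n <;> by_cases h2 : n < b
  · have hs : {k : ℤ | k ∈ Set.Icc a b ∧ |k - n| = 1} = {n - 1, n + 1} := by
      ext k; simp only [Set.mem_Icc, Set.mem_setOf_eq, abs_sub_eq_one_iff,
        Set.mem_insert_iff, Set.mem_singleton_iff]; omega
    rw [hs, Set.ncard_pair (by omega)]
    simp [h1, h2]
  · have hs : {k : ℤ | k ∈ Set.Icc a b ∧ |k - n| = 1} = {n - 1} := by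
      ext k; simp only [Set.mem_Icc, Set.mem_setOf_eq, abs_sub_eq_one_iff,
        Set.mem_singleton_iff]; omega
    rw [hs, Set.ncard_singleton]
    simp [h1, h2]
  · have hs : {k : ℤ | k ∈ Set.Icc a b ∧ |k - n| = 1} = {n + 1} := by
      ext k; simp only [Set.mem_Icc, Set.mem_setOf_eq, abs_sub_eq_one_iff,
        Set.mem_singleton_iff]; omega
    rw [hs, Set.ncard_singleton]
    simp [h1, h2]
  · have hs : {k : ℤ | k ∈ Set.Icc a b ∧ |k - n| = 1} = ∅ := by
      ext k; simp only [Set.mem_Icc, Set.mem_setOf_eq, abs_sub_eq_one_iff,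
        Set.mem_empty_iff_false, iff_false, not_and]; omega
    rw [hs, Set.ncard_empty]
    simp [h1, h2]

lemma arc_facts {C : Set (ℤ × ℤ)} (hC : IsArc C) :
    ∃ hfin : C.Finite,
      (∀ z ∈ C, (AdjSet z ∩ C).ncard ≤ 2) ∧
      ((∑ z ∈ hfin.toFinset, (AdjSet z ∩ C).ncard) = 2 * (C.ncard - 1)) ∧
      (2 ≤ C.ncard → ∃ z ∈ C, (AdjSet z ∩ C).ncard ≤ 1) ∧
      (3 ≤ C.ncard → ∃ z ∈ C, 2 ≤ (AdjSet z ∩ C).ncard) := by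
  classical
  letI : TopologicalSpace (ℤ × ℤ) := khPlane
  letI : TopologicalSpace ℤ := khLine
  obtain ⟨a, b, ⟨e⟩⟩ := hC
  have e' : ↥C ≃ₜ ↥(Set.Icc a b) := e
  -- adjacency transfer
  have hvalC : Topology.IsInducing (Subtype.val : ↥C → ℤ × ℤ) := Topology.IsInducing.subtypeVal
  have hvalI : Topology.IsInducing (Subtype.val : ↥(Set.Icc a b) → ℤ) :=
    Topology.IsInducing.subtypeVal
  have adj_iff : ∀ u v : ↥C, (u.1 ∈ AdjSet v.1 ↔ |(e' v).1 - (e' u).1| = 1) := by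
    intro u v
    by_cases huv : u = v
    · subst huv
      simp [AdjSet]
    · have h1 : u.1 ≠ v.1 := fun h => huv (Subtype.ext h)
      have h2 : (e' u).1 ≠ (e' v).1 :=
        fun h => huv (e'.toEquiv.injective (Subtype.ext h))
      constructor
      · intro h
        have hc : IsConnected ({v.1, u.1} : Set (ℤ × ℤ)) := h.2
        have hc2 : IsConnected ({v, u} : Set ↥C) := (inducing_pair_conn hvalC v u).mp hc
        have hc3 : IsConnected ({e' v, e' u} : Set ↥(Set.Icc a b)) :=
          (inducing_pair_conn e'.isInducing v u).mpr hc2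
        have hc4 : IsConnected ({(e' v).1, (e' u).1} : Set ℤ) :=
          (inducing_pair_conn hvalI (e' v) (e' u)).mpr hc3
        exact (line_adj_iff h2).mp hc4
      · intro h
        have hc4 : IsConnected ({(e' v).1, (e' u).1} : Set ℤ) := (line_adj_iff h2).mpr h
        have hc3 : IsConnected ({e' v, e' u} : Set ↥(Set.Icc a b)) :=
          (inducing_pair_conn hvalI (e' v) (e' u)).mp hc4
        have hc2 : IsConnected ({v, u} : Set ↥C) :=
          (inducing_pair_conn e'.isInducing v u).mp hc3
        exact ⟨h1, (inducing_pair_conn hvalC v u).mpr hc2⟩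
  -- the counting map
  set F : (ℤ × ℤ) → ℤ := fun z => if h : z ∈ C then (e' ⟨z, h⟩).1 else 0 with hF
  have hFval : ∀ (z : ℤ × ℤ) (h : z ∈ C), F z = (e' ⟨z, h⟩).1 := fun z h => dif_pos h
  have deg_eq : ∀ v : ↥C, (AdjSet v.1 ∩ C).ncard
      = ({k : ℤ | k ∈ Set.Icc a b ∧ |k - (e' v).1| = 1}).ncard := by
    intro v
    have hbij : Set.BijOn F (AdjSet v.1 ∩ C) {k : ℤ | k ∈ Set.Icc a b ∧ |k - (e' v).1| = 1} := by
      refine ⟨?_, ?_, ?_⟩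
      · rintro z ⟨hz1, hz2⟩
        rw [hFval z hz2]
        refine ⟨(e' ⟨z, hz2⟩).2, ?_⟩
        rw [abs_sub_comm]
        exact (adj_iff ⟨z, hz2⟩ v).mp hz1
      · rintro z ⟨hz1, hz2⟩ z' ⟨hz1', hz2'⟩ hzz
        rw [hFval z hz2, hFval z' hz2'] at hzz
        have := e'.toEquiv.injective (Subtype.ext hzz)
        exact congrArg Subtype.val this
      · rintro k ⟨hk1, hk2⟩
        refine ⟨(e'.symm ⟨k, hk1⟩).1, ⟨?_, (e'.symm ⟨k, hk1⟩).2⟩, ?_⟩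
        · refine (adj_iff (e'.symm ⟨k, hk1⟩) v).mpr ?_
          rw [e'.apply_symm_apply]
          simpa [abs_sub_comm] using hk2
        · rw [hFval _ (e'.symm ⟨k, hk1⟩).2, Subtype.coe_eta, e'.apply_symm_apply]
    rw [← hbij.image_eq, Set.ncard_image_of_injOn hbij.injOn]
  have deg_formula : ∀ v : ↥C, (AdjSet v.1 ∩ C).ncard
      = (if a < (e' v).1 then 1 else 0) + (if (e' v).1 < b then 1 else 0) := by
    intro v
    rw [deg_eq v]
    exact Icc_nbr_card (Set.mem_Icc.mp (e' v).2).1 (Set.mem_Icc.mp (e' v).2).2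
  -- finiteness
  have hfinIcc : (Set.Icc a b).Finite := Set.finite_Icc a b
  have hfinC : C.Finite := by
    rw [← Set.finite_coe_iff]
    have : Finite ↥(Set.Icc a b) := Set.finite_coe_iff.mpr hfinIcc
    exact Finite.of_equiv _ e'.toEquiv.symm
  have hcard : C.ncard = (b + 1 - a).toNat := by
    rw [← Nat.card_coe_set_eq, Nat.card_congr e'.toEquiv, Nat.card_coe_set_eq,
      ← Finset.coe_Icc, Set.ncard_coe_finset, Int.card_Icc]
  refine ⟨hfinC, ?_, ?_, ?_, ?_⟩
  · intro z hz
    rw [deg_formula ⟨z, hz⟩]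
    split_ifs <;> omega
  · -- sum formula
    set G : ℤ → (ℤ × ℤ) := fun k => if h : k ∈ Set.Icc a b then (e'.symm ⟨k, h⟩).1 else (0, 0)
      with hG
    have hsum : (∑ z ∈ hfinC.toFinset, (AdjSet z ∩ C).ncard)
        = ∑ n ∈ Finset.Icc a b, ((if a < n then 1 else 0) + (if n < b then 1 else 0)) := by
      refine Finset.sum_nbij' F G ?_ ?_ ?_ ?_ ?_
      · intro z hz
        rw [Set.Finite.mem_toFinset] at hz
        rw [hFval z hz, Finset.mem_Icc]
        exact Set.mem_Icc.mp (e' ⟨z, hz⟩).2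
      · intro k hk
        rw [Finset.mem_Icc] at hk
        have hk' : k ∈ Set.Icc a b := Set.mem_Icc.mpr hk
        rw [Set.Finite.mem_toFinset, hG]
        simp only [dif_pos hk']
        exact (e'.symm ⟨k, hk'⟩).2
      · intro z hz
        rw [Set.Finite.mem_toFinset] at hz
        rw [hFval z hz, hG]
        simp only [dif_pos (e' ⟨z, hz⟩).2]
        rw [Subtype.coe_eta, e'.symm_apply_apply]
      · intro k hk
        rw [Finset.mem_Icc] at hk
        have hk' : k ∈ Set.Icc a b := Set.mem_Icc.mpr hk
        rw [hG]
        simp only [dif_pos hk']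
        rw [hFval _ (e'.symm ⟨k, hk'⟩).2, Subtype.coe_eta, e'.apply_symm_apply]
      · intro z hz
        rw [Set.Finite.mem_toFinset] at hz
        rw [deg_formula ⟨z, hz⟩, hFval z hz]
    rw [hsum, Finset.sum_add_distrib]
    have h1 : (∑ n ∈ Finset.Icc a b, if a < n then 1 else 0) = (b - a).toNat := by
      rw [← Finset.card_filter]
      have : Finset.filter (fun n => a < n) (Finset.Icc a b) = Finset.Ioc a b := by
        ext k; simp only [Finset.mem_filter, Finset.mem_Icc, Finset.mem_Ioc]; omega
      rw [this, Int.card_Ioc]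
    have h2 : (∑ n ∈ Finset.Icc a b, if n < b then 1 else 0) = (b - a).toNat := by
      rw [← Finset.card_filter]
      have : Finset.filter (fun n => n < b) (Finset.Icc a b) = Finset.Ico a b := by
        ext k; simp only [Finset.mem_filter, Finset.mem_Icc, Finset.mem_Ico]; omega
      rw [this, Int.card_Ico]
    rw [h1, h2, hcard]
    omega
  · intro hn
    rw [hcard] at hn
    have hab : a < b := by omega
    have ha : a ∈ Set.Icc a b := Set.mem_Icc.mpr ⟨le_refl a, by omega⟩
    refine ⟨(e'.symm ⟨a, ha⟩).1, (e'.symm ⟨a, ha⟩).2, ?_⟩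
    rw [deg_formula (e'.symm ⟨a, ha⟩), e'.apply_symm_apply]
    simp [hab]
  · intro hn
    rw [hcard] at hn
    have hab : a + 2 ≤ b := by omega
    have ha : a + 1 ∈ Set.Icc a b := Set.mem_Icc.mpr ⟨by omega, by omega⟩
    refine ⟨(e'.symm ⟨a + 1, ha⟩).1, (e'.symm ⟨a + 1, ha⟩).2, ?_⟩
    rw [deg_formula (e'.symm ⟨a + 1, ha⟩), e'.apply_symm_apply]
    have h1 : a < a + 1 := by omega
    have h2 : a + 1 < b := by omega
    simp [h1, h2]

lemma encard_eq_ncard {α : Type*} {s : Set α} (h : s.Finite) : s.encard = s.ncard := by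
  exact_mod_cast (h.encard_eq_coe_toFinset_card).trans
    (congrArg _ (Set.ncard_eq_toFinset_card s h).symm)

lemma not_self_mem_adjSet {x : ℤ × ℤ} : x ∉ AdjSet x := fun h => (mem_adjSet_iff.mp h).1 rfl

lemma jordan_deg {J : Set (ℤ × ℤ)} (hJ : IsJordanCurve J) :
    J.Finite ∧ ∀ x ∈ J, (AdjSet x ∩ J).ncard = 2 := by
  classical
  obtain ⟨hconn, hcard4, harc⟩ := hJ
  obtain ⟨x0, hx0⟩ := hconn.1
  -- finiteness
  obtain ⟨hfinA0, -, -, -, -⟩ := arc_facts (harc x0 hx0)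
  have hfinJ : J.Finite := by
    have : J ⊆ insert x0 (J \ {x0}) := by
      intro z hz; by_cases h : z = x0
      · exact Or.inl h
      · exact Or.inr ⟨hz, h⟩
    exact Set.Finite.subset (hfinA0.insert x0) this
  have hNcard : 4 ≤ J.ncard := by
    have := hcard4.trans_eq (encard_eq_ncard hfinJ)
    exact_mod_cast this
  -- the degree decomposition
  have hdecomp : ∀ x ∈ J, ∀ z ∈ J \ {x}, (AdjSet z ∩ J).ncard
      = (AdjSet z ∩ (J \ {x})).ncard + (if x ∈ AdjSet z then 1 else 0) := by
    intro x hx z hz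
    have hsplit : AdjSet z ∩ J = (AdjSet z ∩ (J \ {x})) ∪ (AdjSet z ∩ {x}) := by
      rw [← Set.inter_union_distrib_left, Set.diff_union_of_subset (by simpa using hx)]
    rw [hsplit, Set.ncard_union_eq ?disj ?f1 ?f2]
    case disj =>
      refine Set.disjoint_left.mpr ?_
      rintro w ⟨-, -, hw2⟩ ⟨-, hw3⟩
      exact hw2 hw3
    case f1 => exact (hfinJ.diff).inter_of_right _
    case f2 => exact (Set.finite_singleton x).inter_of_right _
    congr 1
    by_cases h : x ∈ AdjSet z
    · rw [if_pos h]
      have : AdjSet z ∩ {x} = {x} := by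
        apply Set.inter_eq_self_of_subset_right
        intro w hw; rw [hw]; exact h
      rw [this, Set.ncard_singleton]
    · rw [if_neg h]
      have : AdjSet z ∩ {x} = ∅ := by
        ext w; simp only [Set.mem_inter_iff, Set.mem_singleton_iff, Set.mem_empty_iff_false,
          iff_false, not_and]
        rintro hw rfl; exact h hw
      rw [this, Set.ncard_empty]
  -- indicator sums to degree of x
  have hindsum : ∀ x ∈ J, ∀ hfinA : (J \ {x}).Finite,
      (∑ z ∈ hfinA.toFinset, (if x ∈ AdjSet z then 1 else 0)) = (AdjSet x ∩ J).ncard := by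
    intro x hx hfinA
    rw [← Finset.card_filter]
    have hAx : AdjSet x ∩ J = AdjSet x ∩ (J \ {x}) := by
      ext w
      simp only [Set.mem_inter_iff, Set.mem_diff, Set.mem_singleton_iff]
      constructor
      · rintro ⟨h1, h2⟩; exact ⟨h1, h2, fun hh => (mem_adjSet_iff.mp h1).1 hh⟩
      · rintro ⟨h1, h2, -⟩; exact ⟨h1, h2⟩
    have hfinAx : (AdjSet x ∩ (J \ {x})).Finite := hfinA.inter_of_right _
    rw [hAx, Set.ncard_eq_toFinset_card _ hfinAx]
    congr 1
    ext w
    simp only [Finset.mem_filter, Set.Finite.mem_toFinset, Set.mem_inter_iff]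
    constructor
    · rintro ⟨h1, h2⟩; exact ⟨adjSet_comm.mp h2, h1⟩
    · rintro ⟨h1, h2⟩; exact ⟨h2, adjSet_comm.mp h1⟩
  have hmain : ∀ x ∈ J, (∑ z ∈ hfinJ.toFinset, (AdjSet z ∩ J).ncard)
      = 2 * (AdjSet x ∩ J).ncard + 2 * (J.ncard - 2) := by
    intro x hx
    obtain ⟨hfinA, -, hsum, -, -⟩ := arc_facts (harc x hx)
    have hAcard : (J \ {x}).ncard = J.ncard - 1 := Set.ncard_diff_singleton_of_mem hx
    have herase : hfinA.toFinset = hfinJ.toFinset.erase x := by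
      ext w
      simp only [Set.Finite.mem_toFinset, Finset.mem_erase, Set.mem_diff,
        Set.mem_singleton_iff]
      tauto
    have hS1 : (AdjSet x ∩ J).ncard + ∑ z ∈ hfinA.toFinset, (AdjSet z ∩ J).ncard
        = ∑ z ∈ hfinJ.toFinset, (AdjSet z ∩ J).ncard := by
      rw [herase]
      exact Finset.add_sum_erase _ (fun z => (AdjSet z ∩ J).ncard) (by simpa using hx)
    have hS2 : ∑ z ∈ hfinA.toFinset, (AdjSet z ∩ J).ncard
        = (∑ z ∈ hfinA.toFinset, (AdjSet z ∩ (J \ {x})).ncard)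
          + (∑ z ∈ hfinA.toFinset, (if x ∈ AdjSet z then 1 else 0)) := by
      rw [← Finset.sum_add_distrib]
      apply Finset.sum_congr rfl
      intro z hz
      rw [Set.Finite.mem_toFinset] at hz
      exact hdecomp x hx z hz
    rw [hS2, hsum, hindsum x hx hfinA, hAcard] at hS1
    omega
  -- degrees are constant
  have hconst : ∀ x ∈ J, ∀ y ∈ J, (AdjSet x ∩ J).ncard = (AdjSet y ∩ J).ncard := by
    intro x hx y hy
    have h1 := hmain x hx
    have h2 := hmain y hy
    omega
  -- find a point of degree ≤ 2 and a point of degree ≥ 2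
  obtain ⟨hfinA, -, -, hend, hint⟩ := arc_facts (harc x0 hx0)
  have hAcard : (J \ {x0}).ncard = J.ncard - 1 := Set.ncard_diff_singleton_of_mem hx0
  obtain ⟨ze, hze, hdegze⟩ := hend (by omega)
  obtain ⟨zi, hzi, hdegzi⟩ := hint (by omega)
  have hze' : (AdjSet ze ∩ J).ncard ≤ 2 := by
    rw [hdecomp x0 hx0 ze hze]
    split_ifs <;> omega
  have hzi' : 2 ≤ (AdjSet zi ∩ J).ncard := by
    rw [hdecomp x0 hx0 zi hzi]
    split_ifs <;> omega
  have hdeq := hconst ze hze.1 zi hzi.1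
  refine ⟨hfinJ, fun x hx => ?_⟩
  have h1 := hconst x hx ze hze.1
  omega

lemma Γinj : Function.Injective Γmap := by
  rintro ⟨a, b⟩ ⟨c, d⟩ h
  rw [Γmap, Γmap, Prod.mk.injEq] at h
  rw [Prod.mk.injEq]
  omega

lemma Γpure (p : ℤ × ℤ) : IsPure (Γmap p) := by
  rcases p with ⟨a, b⟩
  show (a + b) % 2 = (b - a) % 2
  omega

lemma pure_range {y : ℤ × ℤ} (hy : IsPure y) : ∃ q, Γmap q = y := by
  rcases y with ⟨a, b⟩
  have hy' : a % 2 = b % 2 := hy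
  refine ⟨((a - b) / 2, (a + b) / 2), ?_⟩
  rw [Γmap, Prod.mk.injEq]
  constructor <;> simp only <;> omega

lemma prod_fst_snd (y : ℤ × ℤ) : y = (y.1, y.2) := rfl

lemma minN_mixed_e {m : ℤ × ℤ} (h1 : m.1 % 2 = 0) (h2 : m.2 % 2 ≠ 0) :
    minN m = {(m.1 - 1, m.2), m, (m.1 + 1, m.2)} := by
  ext ⟨y1, y2⟩
  rw [prod_fst_snd m, mem_minN_iff]
  simp only [mem_khN_iff', Set.mem_insert_iff, Set.mem_singleton_iff, Prod.mk.injEq]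
  omega

lemma clPt_mixed_e {m : ℤ × ℤ} (h1 : m.1 % 2 = 0) (h2 : m.2 % 2 ≠ 0) :
    clPt m = {(m.1, m.2 - 1), m, (m.1, m.2 + 1)} := by
  ext ⟨y1, y2⟩
  rw [mem_clPt_iff, mem_minN_iff, prod_fst_snd m]
  simp only [mem_khN_iff', Set.mem_insert_iff, Set.mem_singleton_iff, Prod.mk.injEq]
  omega

lemma minN_mixed_o {m : ℤ × ℤ} (h1 : m.1 % 2 ≠ 0) (h2 : m.2 % 2 = 0) :
    minN m = {(m.1, m.2 - 1), m, (m.1, m.2 + 1)} := by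
  ext ⟨y1, y2⟩
  rw [prod_fst_snd m, mem_minN_iff]
  simp only [mem_khN_iff', Set.mem_insert_iff, Set.mem_singleton_iff, Prod.mk.injEq]
  omega

lemma clPt_mixed_o {m : ℤ × ℤ} (h1 : m.1 % 2 ≠ 0) (h2 : m.2 % 2 = 0) :
    clPt m = {(m.1 - 1, m.2), m, (m.1 + 1, m.2)} := by
  ext ⟨y1, y2⟩
  rw [mem_clPt_iff, mem_minN_iff, prod_fst_snd m]
  simp only [mem_khN_iff', Set.mem_insert_iff, Set.mem_singleton_iff, Prod.mk.injEq]
  omega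

lemma adj4_iff {p q : ℤ × ℤ} : Adj4 p q ↔
    ¬(p.1 = q.1 ∧ p.2 = q.2) ∧ (p.1 - q.1).natAbs + (p.2 - q.2).natAbs = 1 := by
  unfold Adj4
  rw [Ne, Prod.ext_iff, Int.abs_eq_natAbs, Int.abs_eq_natAbs]
  omega

lemma adj8_iff {p q : ℤ × ℤ} : Adj8 p q ↔
    ¬(p.1 = q.1 ∧ p.2 = q.2) ∧ (p.1 - q.1).natAbs ≤ 1 ∧ (p.2 - q.2).natAbs ≤ 1 := by
  unfold Adj8
  rw [Ne, Prod.ext_iff, Int.abs_eq_natAbs, Int.abs_eq_natAbs]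
  omega

lemma adj_pure' {x y : ℤ × ℤ} (hx : IsPure x) : y ∈ AdjSet x ↔
    ¬(y.1 = x.1 ∧ y.2 = x.2) ∧ (y.1 - x.1).natAbs ≤ 1 ∧ (y.2 - x.2).natAbs ≤ 1 := by
  rw [adj_pure hx, Ne, Prod.ext_iff, Int.abs_eq_natAbs, Int.abs_eq_natAbs]
  omega

lemma adj_mixed' {x y : ℤ × ℤ} (hx : IsMixed x) : y ∈ AdjSet x ↔
    (y.1 = x.1 ∧ (y.2 - x.2).natAbs = 1) ∨ (y.2 = x.2 ∧ (y.1 - x.1).natAbs = 1) := by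
  rw [adj_mixed hx, Int.abs_eq_natAbs, Int.abs_eq_natAbs]
  omega

lemma mem_image_preimage {J : Set (ℤ × ℤ)} {z : ℤ × ℤ} :
    z ∈ Γmap '' (Γmap ⁻¹' J) ↔ IsPure z ∧ z ∈ J := by
  constructor
  · rintro ⟨q, hq, rfl⟩
    exact ⟨Γpure q, hq⟩
  · rintro ⟨h1, h2⟩
    obtain ⟨q, rfl⟩ := pure_range h1
    exact ⟨q, h2, rfl⟩

lemma Γfst (q : ℤ × ℤ) : (Γmap q).1 = q.1 + q.2 := rfl
lemma Γsnd (q : ℤ × ℤ) : (Γmap q).2 = q.2 - q.1 := rfl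

lemma part1 {J : Set (ℤ × ℤ)} (hfinJ : J.Finite)
    (hdeg : ∀ x ∈ J, (AdjSet x ∩ J).ncard = 2)
    (hpure : ∀ y ∈ J, IsPure y) :
    Is4ClosedCurve (Γmap ⁻¹' J) := by
  classical
  refine ⟨hfinJ.preimage (Γinj.injOn), ?_⟩
  intro p hp
  have hxJ : Γmap p ∈ J := hp
  have hxpure : IsPure (Γmap p) := Γpure p
  have himg : Γmap '' (nbrs4 (Γmap ⁻¹' J) p) = AdjSet (Γmap p) ∩ J := by
    ext y
    constructor
    · rintro ⟨q, ⟨hqJ, h4⟩, rfl⟩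
      rw [adj4_iff] at h4
      refine ⟨(adj_pure' hxpure).mpr ?_, hqJ⟩
      rw [Γfst, Γfst, Γsnd, Γsnd]
      omega
    · rintro ⟨hy1, hy2⟩
      have hyp : IsPure y := hpure y hy2
      obtain ⟨q, rfl⟩ := pure_range hyp
      rw [adj_pure' hxpure] at hy1
      rw [Γfst, Γfst, Γsnd, Γsnd] at hy1
      have hqp : IsPure (Γmap q) := Γpure q
      refine ⟨q, ⟨hy2, adj4_iff.mpr ?_⟩, rfl⟩
      have hpar : (Γmap p).1 % 2 = (Γmap p).2 % 2 := hxpure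
      have hpar2 : (Γmap q).1 % 2 = (Γmap q).2 % 2 := hqp
      rw [Γfst, Γsnd] at hpar hpar2
      omega
  have h2 : (AdjSet (Γmap p) ∩ J).encard = 2 := by
    rw [encard_eq_ncard (hfinJ.inter_of_right _), hdeg (Γmap p) hxJ]
    norm_num
  rw [← h2, ← himg, Set.InjOn.encard_image (Γinj.injOn)]

lemma three_le_ncard {s : Set (ℤ × ℤ)} (hfin : s.Finite) {a b c : ℤ × ℤ}
    (ha : a ∈ s) (hb : b ∈ s) (hc : c ∈ s)
    (hab : a ≠ b) (hac : a ≠ c) (hbc : b ≠ c) : 3 ≤ s.ncard := by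
  have hsub : ({a, b, c} : Set (ℤ × ℤ)) ⊆ s := by
    rintro w (rfl | rfl | rfl) <;> assumption
  have h3 : ({a, b, c} : Set (ℤ × ℤ)).ncard = 3 := by
    rw [Set.ncard_insert_of_notMem (by simp [hab, hac]), Set.ncard_pair hbc]
  exact h3 ▸ Set.ncard_le_ncard hsub hfin

lemma companions {J : Set (ℤ × ℤ)} (hstar : ΓStar (Γmap ⁻¹' J) = J) {m : ℤ × ℤ}
    (hmJ : m ∈ J) (hmix : IsMixed m) :
    ((m.1 - 1, m.2) ∈ J ∧ (m.1 + 1, m.2) ∈ J) ∨ ((m.1, m.2 - 1) ∈ J ∧ (m.1, m.2 + 1) ∈ J) := by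
  have hm' : m ∈ ΓStar (Γmap ⁻¹' J) := by rw [hstar]; exact hmJ
  have hcases : minN m ⊆ Γmap '' (Γmap ⁻¹' J) ∪ {m} ∨ clPt m ⊆ Γmap '' (Γmap ⁻¹' J) ∪ {m} := by
    rcases hm' with h | ⟨-, h2⟩
    · obtain ⟨q, -, rfl⟩ := h; exact absurd (Γpure q) hmix
    · exact h2
  have hpar : ¬ (m.1 % 2 = m.2 % 2) := hmix
  have extract : ∀ w : ℤ × ℤ, (w.1 ≠ m.1 ∨ w.2 ≠ m.2) → w ∈ Γmap '' (Γmap ⁻¹' J) ∪ {m} → w ∈ J := by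
    rintro w hw (h | h)
    · exact mem_image_preimage.mp h |>.2
    · rcases hw with hw | hw
      · exact absurd (congrArg Prod.fst h) hw
      · exact absurd (congrArg Prod.snd h) hw
  by_cases he : m.1 % 2 = 0
  · have ho : m.2 % 2 ≠ 0 := by omega
    rcases hcases with h | h
    · rw [minN_mixed_e he ho] at h
      exact Or.inl ⟨extract _ (Or.inl (by simp)) (h (by simp)),
        extract _ (Or.inl (by simp)) (h (by simp))⟩
    · rw [clPt_mixed_e he ho] at h
      exact Or.inr ⟨extract _ (Or.inr (by simp)) (h (by simp)),
        extract _ (Or.inr (by simp)) (h (by simp))⟩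
  · have ho : m.2 % 2 = 0 := by omega
    rcases hcases with h | h
    · rw [minN_mixed_o he ho] at h
      exact Or.inr ⟨extract _ (Or.inr (by simp)) (h (by simp)),
        extract _ (Or.inr (by simp)) (h (by simp))⟩
    · rw [clPt_mixed_o he ho] at h
      exact Or.inl ⟨extract _ (Or.inl (by simp)) (h (by simp)),
        extract _ (Or.inl (by simp)) (h (by simp))⟩

lemma midpoint_mem {J : Set (ℤ × ℤ)} (hstar : ΓStar (Γmap ⁻¹' J) = J) {x z m : ℤ × ℤ}
    (hx : x ∈ Γmap '' (Γmap ⁻¹' J)) (hz : z ∈ Γmap '' (Γmap ⁻¹' J))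
    (hm : (x.1 = m.1 - 1 ∧ z.1 = m.1 + 1 ∧ x.2 = m.2 ∧ z.2 = m.2) ∨
          (x.1 = m.1 ∧ z.1 = m.1 ∧ x.2 = m.2 - 1 ∧ z.2 = m.2 + 1)) : m ∈ J := by
  have hxp : IsPure x := (mem_image_preimage.mp hx).1
  have hpar : x.1 % 2 = x.2 % 2 := hxp
  rw [← hstar]
  have hmix : IsMixed m := by
    unfold IsMixed IsPure
    rcases hm with ⟨h1, h2, h3, h4⟩ | ⟨h1, h2, h3, h4⟩ <;> omega
  refine Or.inr ⟨hmix, ?_⟩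
  rcases hm with ⟨h1, h2, h3, h4⟩ | ⟨h1, h2, h3, h4⟩
  · have htrip : ({(m.1 - 1, m.2), m, (m.1 + 1, m.2)} : Set (ℤ × ℤ))
        ⊆ Γmap '' (Γmap ⁻¹' J) ∪ {m} := by
      rintro w (rfl | rfl | rfl)
      · have hh : (m.1 - 1, m.2) = x := Prod.ext (by simp; omega) (by simp; omega)
        rw [hh]; exact Or.inl hx
      · exact Or.inr rfl
      · have hh : (m.1 + 1, m.2) = z := Prod.ext (by simp; omega) (by simp; omega)
        rw [hh]; exact Or.inl hz
    by_cases he : m.1 % 2 = 0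
    · exact Or.inl (by rw [minN_mixed_e he (by unfold IsMixed IsPure at hmix; omega)]; exact htrip)
    · exact Or.inr (by rw [clPt_mixed_o he (by unfold IsMixed IsPure at hmix; omega)]; exact htrip)
  · have htrip : ({(m.1, m.2 - 1), m, (m.1, m.2 + 1)} : Set (ℤ × ℤ))
        ⊆ Γmap '' (Γmap ⁻¹' J) ∪ {m} := by
      rintro w (rfl | rfl | rfl)
      · have hh : (m.1, m.2 - 1) = x := Prod.ext (by simp; omega) (by simp; omega)
        rw [hh]; exact Or.inl hx
      · exact Or.inr rfl
      · have hh : (m.1, m.2 + 1) = z := Prod.ext (by simp; omega) (by simp; omega)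
        rw [hh]; exact Or.inl hz
    by_cases he : m.1 % 2 = 0
    · exact Or.inr (by rw [clPt_mixed_e he (by unfold IsMixed IsPure at hmix; omega)]; exact htrip)
    · exact Or.inl (by rw [minN_mixed_o he (by unfold IsMixed IsPure at hmix; omega)]; exact htrip)

lemma part2 {J : Set (ℤ × ℤ)} (hfinJ : J.Finite)
    (hdeg : ∀ x ∈ J, (AdjSet x ∩ J).ncard = 2)
    (hstar : ΓStar (Γmap ⁻¹' J) = J) :
    Is8ClosedCurve (Γmap ⁻¹' J) := by
  classical
  refine ⟨hfinJ.preimage Γinj.injOn, ?_⟩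
  intro p hp
  have hxJ : Γmap p ∈ J := hp
  have hxpure : IsPure (Γmap p) := Γpure p
  set f : (ℤ × ℤ) → (ℤ × ℤ) := fun q =>
    if (p.1 - q.1).natAbs + (p.2 - q.2).natAbs = 1 then Γmap q
    else ((p.1 + p.2 + q.1 + q.2) / 2, (p.2 - p.1 + q.2 - q.1) / 2) with hf
  have hfval1 : ∀ q, (p.1 - q.1).natAbs + (p.2 - q.2).natAbs = 1 → f q = Γmap q :=
    fun q h => if_pos h
  have hfval2 : ∀ q, ¬((p.1 - q.1).natAbs + (p.2 - q.2).natAbs = 1) →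
      f q = ((p.1 + p.2 + q.1 + q.2) / 2, (p.2 - p.1 + q.2 - q.1) / 2) :=
    fun q h => if_neg h
  have hbij : Set.BijOn f (nbrs8 (Γmap ⁻¹' J) p) (AdjSet (Γmap p) ∩ J) := by
    refine ⟨?_, ?_, ?_⟩
    · rintro q ⟨hqJ, hq8⟩
      rw [adj8_iff] at hq8
      obtain ⟨hne, h1, h2⟩ := hq8
      by_cases h4 : (p.1 - q.1).natAbs + (p.2 - q.2).natAbs = 1
      · rw [hfval1 q h4]
        refine ⟨(adj_pure' hxpure).mpr ?_, hqJ⟩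
        rw [Γfst, Γfst, Γsnd, Γsnd]
        omega
      · rw [hfval2 q h4]
        have hd1 : (p.1 - q.1).natAbs = 1 := by omega
        have hd2 : (p.2 - q.2).natAbs = 1 := by omega
        have hxGP : Γmap p ∈ Γmap '' (Γmap ⁻¹' J) := ⟨p, hp, rfl⟩
        have hqGP : Γmap q ∈ Γmap '' (Γmap ⁻¹' J) := ⟨q, hqJ, rfl⟩
        have hmem : ((p.1 + p.2 + q.1 + q.2) / 2, (p.2 - p.1 + q.2 - q.1) / 2) ∈ J := by
          rcases (by omega : (q.1 = p.1 + 1 ∧ q.2 = p.2 + 1) ∨ (q.1 = p.1 - 1 ∧ q.2 = p.2 - 1)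
              ∨ (q.1 = p.1 - 1 ∧ q.2 = p.2 + 1) ∨ (q.1 = p.1 + 1 ∧ q.2 = p.2 - 1)) with
            hc | hc | hc | hc
          · exact midpoint_mem hstar hxGP hqGP
              (Or.inl (by rw [Γfst, Γfst, Γsnd, Γsnd]; simp; omega))
          · exact midpoint_mem hstar hqGP hxGP
              (Or.inl (by rw [Γfst, Γfst, Γsnd, Γsnd]; simp; omega))
          · exact midpoint_mem hstar hxGP hqGP
              (Or.inr (by rw [Γfst, Γfst, Γsnd, Γsnd]; simp; omega))
          · exact midpoint_mem hstar hqGP hxGP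
              (Or.inr (by rw [Γfst, Γfst, Γsnd, Γsnd]; simp; omega))
        refine ⟨(adj_pure' hxpure).mpr ?_, hmem⟩
        rw [Γfst, Γsnd]
        simp
        omega
    · rintro q ⟨hqJ, hq8⟩ q' ⟨hqJ', hq8'⟩ heq
      rw [adj8_iff] at hq8 hq8'
      obtain ⟨hne, h1, h2⟩ := hq8
      obtain ⟨hne', h1', h2'⟩ := hq8'
      by_cases h4 : (p.1 - q.1).natAbs + (p.2 - q.2).natAbs = 1 <;>
        by_cases h4' : (p.1 - q'.1).natAbs + (p.2 - q'.2).natAbs = 1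
      · rw [hfval1 q h4, hfval1 q' h4'] at heq
        exact Γinj heq
      · rw [hfval1 q h4, hfval2 q' h4'] at heq
        exfalso
        have e1 := congrArg Prod.fst heq
        have e2 := congrArg Prod.snd heq
        rw [Γfst] at e1
        rw [Γsnd] at e2
        simp at e1 e2
        omega
      · rw [hfval2 q h4, hfval1 q' h4'] at heq
        exfalso
        have e1 := congrArg Prod.fst heq
        have e2 := congrArg Prod.snd heq
        rw [Γfst] at e1
        rw [Γsnd] at e2
        simp at e1 e2
        omega
      · rw [hfval2 q h4, hfval2 q' h4'] at heq
        have e1 := congrArg Prod.fst heq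
        have e2 := congrArg Prod.snd heq
        simp at e1 e2
        exact Prod.ext (by omega) (by omega)
    · rintro y ⟨hy1mem, hy2⟩
      have hy1c := (adj_pure' hxpure).mp hy1mem
      rw [Γfst, Γsnd] at hy1c
      by_cases hyp : IsPure y
      · obtain ⟨q, rfl⟩ := pure_range hyp
        have hqpar : (q.1 + q.2) % 2 = (q.2 - q.1) % 2 := by omega
        rw [Γfst, Γsnd] at hy1c
        have hq4 : (p.1 - q.1).natAbs + (p.2 - q.2).natAbs = 1 := by omega
        exact ⟨q, ⟨hy2, adj8_iff.mpr (by omega)⟩, hfval1 q hq4⟩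
      · have hmix : IsMixed y := hyp
        have hparm : ¬ (y.1 % 2 = y.2 % 2) := hmix
        have hparx : (p.1 + p.2) % 2 = (p.2 - p.1) % 2 := by omega
        rcases companions hstar hy2 hmix with ⟨ha, hb⟩ | ⟨ha, hb⟩
        · -- horizontal companions
          by_cases hsame : (Γmap p).2 = y.2
          · rw [Γsnd] at hsame
            by_cases hside : (Γmap p).1 = y.1 - 1
            · rw [Γfst] at hside
              have hzGP : (y.1 + 1, y.2) ∈ Γmap '' (Γmap ⁻¹' J) :=
                mem_image_preimage.mpr ⟨by unfold IsPure; simp; omega, hb⟩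
              obtain ⟨q', hq'P, hq'eq⟩ := hzGP
              have e1 := congrArg Prod.fst hq'eq
              have e2 := congrArg Prod.snd hq'eq
              rw [Γfst] at e1
              rw [Γsnd] at e2
              simp at e1 e2
              refine ⟨q', ⟨hq'P, adj8_iff.mpr (by omega)⟩, ?_⟩
              rw [hfval2 q' (by omega)]
              exact Prod.ext (by simp; omega) (by simp; omega)
            · rw [Γfst] at hside
              have hside' : p.1 + p.2 = y.1 + 1 := by omega
              have hzGP : (y.1 - 1, y.2) ∈ Γmap '' (Γmap ⁻¹' J) :=
                mem_image_preimage.mpr ⟨by unfold IsPure; simp; omega, ha⟩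
              obtain ⟨q', hq'P, hq'eq⟩ := hzGP
              have e1 := congrArg Prod.fst hq'eq
              have e2 := congrArg Prod.snd hq'eq
              rw [Γfst] at e1
              rw [Γsnd] at e2
              simp at e1 e2
              refine ⟨q', ⟨hq'P, adj8_iff.mpr (by omega)⟩, ?_⟩
              rw [hfval2 q' (by omega)]
              exact Prod.ext (by simp; omega) (by simp; omega)
          · -- x is a vertical neighbour: contradiction with degree 2
            exfalso
            rw [Γsnd] at hsame
            have hxcol : p.1 + p.2 = y.1 ∧ (p.2 - p.1 = y.2 - 1 ∨ p.2 - p.1 = y.2 + 1) := by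
              omega
            have haadj : (y.1 - 1, y.2) ∈ AdjSet (Γmap p) := by
              rw [adj_pure' hxpure, Γfst, Γsnd]
              simp
              omega
            have hbadj : (y.1 + 1, y.2) ∈ AdjSet (Γmap p) := by
              rw [adj_pure' hxpure, Γfst, Γsnd]
              simp
              omega
            have h3 := three_le_ncard (hfinJ.inter_of_right _)
              (a := (y.1 - 1, y.2)) (b := (y.1 + 1, y.2)) (c := y)
              ⟨haadj, ha⟩ ⟨hbadj, hb⟩ ⟨hy1mem, hy2⟩
              (by intro h; have := congrArg Prod.fst h; simp at this; try omega)
              (by intro h; have := congrArg Prod.fst h; simp at this; try omega)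
              (by intro h; have := congrArg Prod.fst h; simp at this; try omega)
            rw [hdeg _ hxJ] at h3
            omega
        · -- vertical companions
          by_cases hsame : (Γmap p).1 = y.1
          · rw [Γfst] at hsame
            by_cases hside : (Γmap p).2 = y.2 - 1
            · rw [Γsnd] at hside
              have hzGP : (y.1, y.2 + 1) ∈ Γmap '' (Γmap ⁻¹' J) :=
                mem_image_preimage.mpr ⟨by unfold IsPure; simp; omega, hb⟩
              obtain ⟨q', hq'P, hq'eq⟩ := hzGP
              have e1 := congrArg Prod.fst hq'eq
              have e2 := congrArg Prod.snd hq'eq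
              rw [Γfst] at e1
              rw [Γsnd] at e2
              simp at e1 e2
              refine ⟨q', ⟨hq'P, adj8_iff.mpr (by omega)⟩, ?_⟩
              rw [hfval2 q' (by omega)]
              exact Prod.ext (by simp; omega) (by simp; omega)
            · rw [Γsnd] at hside
              have hside' : p.2 - p.1 = y.2 + 1 := by omega
              have hzGP : (y.1, y.2 - 1) ∈ Γmap '' (Γmap ⁻¹' J) :=
                mem_image_preimage.mpr ⟨by unfold IsPure; simp; omega, ha⟩
              obtain ⟨q', hq'P, hq'eq⟩ := hzGP
              have e1 := congrArg Prod.fst hq'eq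
              have e2 := congrArg Prod.snd hq'eq
              rw [Γfst] at e1
              rw [Γsnd] at e2
              simp at e1 e2
              refine ⟨q', ⟨hq'P, adj8_iff.mpr (by omega)⟩, ?_⟩
              rw [hfval2 q' (by omega)]
              exact Prod.ext (by simp; omega) (by simp; omega)
          · exfalso
            rw [Γfst] at hsame
            have haadj : (y.1, y.2 - 1) ∈ AdjSet (Γmap p) := by
              rw [adj_pure' hxpure, Γfst, Γsnd]
              simp
              omega
            have hbadj : (y.1, y.2 + 1) ∈ AdjSet (Γmap p) := by
              rw [adj_pure' hxpure, Γfst, Γsnd]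
              simp
              omega
            have h3 := three_le_ncard (hfinJ.inter_of_right _)
              (a := (y.1, y.2 - 1)) (b := (y.1, y.2 + 1)) (c := y)
              ⟨haadj, ha⟩ ⟨hbadj, hb⟩ ⟨hy1mem, hy2⟩
              (by intro h; have := congrArg Prod.snd h; simp at this; try omega)
              (by intro h; have := congrArg Prod.snd h; simp at this; try omega)
              (by intro h; have := congrArg Prod.snd h; simp at this; try omega)
            rw [hdeg _ hxJ] at h3
            omega
  have h2 : (AdjSet (Γmap p) ∩ J).encard = 2 := by
    rw [encard_eq_ncard (hfinJ.inter_of_right _), hdeg _ hxJ]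
    norm_num
  rw [← h2, ← hbij.image_eq, Set.InjOn.encard_image hbij.injOn]


/-- For a Jordan curve J: (i) if J contains only pure points, then Γ⁻¹(J) is a
closed 4-curve; (ii) if Γ*(Γ⁻¹(J)) = J, then Γ⁻¹(J) is a closed 8-curve. -/
theorem preimage_of_jordan_curve (J : Set (ℤ × ℤ)) (hJ : IsJordanCurve J) :
    ((∀ p ∈ J, IsPure p) → Is4ClosedCurve (Γmap ⁻¹' J)) ∧
      (ΓStar (Γmap ⁻¹' J) = J → Is8ClosedCurve (Γmap ⁻¹' J)) := by
  obtain ⟨hfinJ, hdeg⟩ := jordan_deg hJ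
  exact ⟨fun hpure => part1 hfinJ hdeg hpure, fun hstar => part2 hfinJ hdeg hstar⟩
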